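/- Let n ≥ 1 be an integer and let a₀,…,a₄, b₀,…,b₃, c₀,…,c₂ be real numbers. Define real polynomials X(x) = Σ_{k=0}^{4} a_k x^k, Y(x) = Σ_{k=0}^{3} b_k x^k, Z(x) = Σ_{k=0}^{2} c_k x^k, and define the operator 𝓗′ on real polynomials p by 𝓗′p = X·p″ + Y·p′ + Z·p. Then 𝓗′ maps every polynomial of degree ≤ n to a polynomial of degree ≤ n if and only if b₃ = −2(n−1)a₄, c₁ = −n((n−1)a₃ + b₂), and c₂ = n(n−1)a₄. -/

import Mathlib

open Polynomial


lemma keyco (a : ℝ) (k m : ℕ) (q : ℝ[X]) (h : k ≤ m) :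
    (C a * X ^ k * q).coeff m = a * q.coeff (m - k) := by
  rw [mul_right_comm, coeff_mul_X_pow', if_pos h, coeff_C_mul]

lemma keyco' (a : ℝ) (k m : ℕ) (q : ℝ[X]) (h : m < k) :
    (C a * X ^ k * q).coeff m = 0 := by
  rw [mul_right_comm, coeff_mul_X_pow', if_neg (by omega)]

lemma keyco1 (a : ℝ) (m : ℕ) (q : ℝ[X]) (h : 1 ≤ m) :
    (C a * X * q).coeff m = a * q.coeff (m - 1) := by
  rw [show (C a * X) = C a * X ^ 1 by rw [pow_one]]; exact keyco a 1 m q h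

lemma coeffQ (a₀ a₁ a₂ a₃ a₄ b₀ b₁ b₂ b₃ c₀ c₁ c₂ : ℝ) (u v w : ℝ[X]) (s : ℕ) :
    ((C a₀ + C a₁ * X + C a₂ * X ^ 2 + C a₃ * X ^ 3 + C a₄ * X ^ 4) * u
      + (C b₀ + C b₁ * X + C b₂ * X ^ 2 + C b₃ * X ^ 3) * v
      + (C c₀ + C c₁ * X + C c₂ * X ^ 2) * w).coeff (s + 4)
    = a₀ * u.coeff (s+4) + a₁ * u.coeff (s+3) + a₂ * u.coeff (s+2) + a₃ * u.coeff (s+1) + a₄ * u.coeff s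
    + (b₀ * v.coeff (s+4) + b₁ * v.coeff (s+3) + b₂ * v.coeff (s+2) + b₃ * v.coeff (s+1))
    + (c₀ * w.coeff (s+4) + c₁ * w.coeff (s+3) + c₂ * w.coeff (s+2)) := by
  simp only [add_mul, coeff_add, coeff_C_mul,
    keyco1 a₁ (s+4) u (by omega), keyco1 b₁ (s+4) v (by omega), keyco1 c₁ (s+4) w (by omega),
    keyco a₂ 2 (s+4) u (by omega), keyco a₃ 3 (s+4) u (by omega), keyco a₄ 4 (s+4) u (by omega),
    keyco b₂ 2 (s+4) v (by omega), keyco b₃ 3 (s+4) v (by omega), keyco c₂ 2 (s+4) w (by omega)]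
  rw [show s+4-2 = s+2 from by omega, show s+4-3 = s+1 from by omega]
  norm_num

lemma coeffQ2 (a₀ a₁ a₂ a₃ a₄ b₀ b₁ b₂ b₃ c₀ c₁ c₂ : ℝ) (u v w : ℝ[X]) :
    ((C a₀ + C a₁ * X + C a₂ * X ^ 2 + C a₃ * X ^ 3 + C a₄ * X ^ 4) * u
      + (C b₀ + C b₁ * X + C b₂ * X ^ 2 + C b₃ * X ^ 3) * v
      + (C c₀ + C c₁ * X + C c₂ * X ^ 2) * w).coeff 2
    = a₀ * u.coeff 2 + a₁ * u.coeff 1 + a₂ * u.coeff 0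
    + (b₀ * v.coeff 2 + b₁ * v.coeff 1 + b₂ * v.coeff 0)
    + (c₀ * w.coeff 2 + c₁ * w.coeff 1 + c₂ * w.coeff 0) := by
  simp only [add_mul, coeff_add, coeff_C_mul,
    keyco1 a₁ 2 u (by omega), keyco1 b₁ 2 v (by omega), keyco1 c₁ 2 w (by omega),
    keyco a₂ 2 2 u (by omega), keyco' a₃ 3 2 u (by omega), keyco' a₄ 4 2 u (by omega),
    keyco b₂ 2 2 v (by omega), keyco' b₃ 3 2 v (by omega), keyco c₂ 2 2 w (by omega)]
  norm_num

lemma coeffQ3 (a₀ a₁ a₂ a₃ a₄ b₀ b₁ b₂ b₃ c₀ c₁ c₂ : ℝ) (u v w : ℝ[X]) :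
    ((C a₀ + C a₁ * X + C a₂ * X ^ 2 + C a₃ * X ^ 3 + C a₄ * X ^ 4) * u
      + (C b₀ + C b₁ * X + C b₂ * X ^ 2 + C b₃ * X ^ 3) * v
      + (C c₀ + C c₁ * X + C c₂ * X ^ 2) * w).coeff 3
    = a₀ * u.coeff 3 + a₁ * u.coeff 2 + a₂ * u.coeff 1 + a₃ * u.coeff 0
    + (b₀ * v.coeff 3 + b₁ * v.coeff 2 + b₂ * v.coeff 1 + b₃ * v.coeff 0)
    + (c₀ * w.coeff 3 + c₁ * w.coeff 2 + c₂ * w.coeff 1) := by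
  simp only [add_mul, coeff_add, coeff_C_mul,
    keyco1 a₁ 3 u (by omega), keyco1 b₁ 3 v (by omega), keyco1 c₁ 3 w (by omega),
    keyco a₂ 2 3 u (by omega), keyco a₃ 3 3 u (by omega), keyco' a₄ 4 3 u (by omega),
    keyco b₂ 2 3 v (by omega), keyco b₃ 3 3 v (by omega), keyco c₂ 2 3 w (by omega)]
  norm_num

/-- Theorem 1: the operator `𝓗' p = X p'' + Y p' + Z p`, with `X, Y, Z` of
degrees at most 4, 3, 2, preserves the space of polynomials of degree ≤ n
iff `b₃ = -2(n-1)a₄`, `c₁ = -n((n-1)a₃ + b₂)` and `c₂ = n(n-1)a₄`. -/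
theorem sl2_algebraization_iff (n : ℕ) (hn : 1 ≤ n)
    (a₀ a₁ a₂ a₃ a₄ b₀ b₁ b₂ b₃ c₀ c₁ c₂ : ℝ) :
    (∀ p : Polynomial ℝ, p.degree ≤ (n : WithBot ℕ) →
      ((C a₀ + C a₁ * X + C a₂ * X ^ 2 + C a₃ * X ^ 3 + C a₄ * X ^ 4) *
          derivative (derivative p)
        + (C b₀ + C b₁ * X + C b₂ * X ^ 2 + C b₃ * X ^ 3) * derivative p
        + (C c₀ + C c₁ * X + C c₂ * X ^ 2) * p).degree ≤ (n : WithBot ℕ))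
    ↔ (b₃ = -2 * ((n : ℝ) - 1) * a₄
        ∧ c₁ = -(n : ℝ) * (((n : ℝ) - 1) * a₃ + b₂)
        ∧ c₂ = (n : ℝ) * ((n : ℝ) - 1) * a₄) := by
  constructor
  · intro h
    have hd1 : ((X : ℝ[X]) ^ n).degree ≤ (n : WithBot ℕ) := (degree_X_pow n).le
    have hd2 : ((X : ℝ[X]) ^ (n - 1)).degree ≤ (n : WithBot ℕ) := by
      rw [degree_X_pow]
      exact_mod_cast Nat.sub_le n 1
    have H1 := h _ hd1
    have H2 := h _ hd2
    have E1 := coeff_eq_zero_of_degree_lt (lt_of_le_of_lt H1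
      (show (n : WithBot ℕ) < ((n + 2 : ℕ) : WithBot ℕ) by exact_mod_cast by omega))
    have E2 := coeff_eq_zero_of_degree_lt (lt_of_le_of_lt H1
      (show (n : WithBot ℕ) < ((n + 1 : ℕ) : WithBot ℕ) by exact_mod_cast by omega))
    have E3 := coeff_eq_zero_of_degree_lt (lt_of_le_of_lt H2
      (show (n : WithBot ℕ) < ((n + 1 : ℕ) : WithBot ℕ) by exact_mod_cast by omega))
    clear H1 H2 h hd1 hd2
    rcases (show n = 1 ∨ n = 2 ∨ ∃ t, n = t + 3 from
      if h3 : n < 3 then by omega else Or.inr (Or.inr ⟨n - 3, by omega⟩)) with rfl | rfl | ⟨t, rfl⟩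
    ·
      rw [show (1:ℕ)+2 = 3 from rfl] at E1
      rw [show (1:ℕ)+1 = 2 from rfl] at E2 E3
      rw [coeffQ3] at E1
      rw [coeffQ2] at E2
      rw [show (1:ℕ)-1 = 0 from rfl] at E3
      rw [coeffQ2] at E3
      simp only [coeff_derivative, coeff_X_pow, pow_one, coeff_X, pow_zero, coeff_one] at E1 E2 E3
      norm_num at E1 E2 E3 ⊢
      refine ⟨?_, ?_, ?_⟩ <;> linarith
    ·
      rw [show (2:ℕ)+2 = 0+4 from rfl] at E1
      rw [show (2:ℕ)+1 = 3 from rfl] at E2 E3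
      rw [coeffQ] at E1
      rw [coeffQ3] at E2
      rw [show (2:ℕ)-1 = 1 from rfl] at E3
      rw [coeffQ3] at E3
      simp only [coeff_derivative, coeff_X_pow, pow_one, coeff_X] at E1 E2 E3
      norm_num at E1 E2 E3 ⊢
      refine ⟨?_, ?_, ?_⟩ <;> linarith
    ·
      rw [show t+3+2 = (t+1)+4 from rfl] at E1
      rw [show t+3+1 = t+4 from rfl] at E2 E3
      rw [show t+4 = t+0+4 from rfl] at E2 E3
      rw [show t+3-1 = t+2 from rfl] at E3
      rw [coeffQ] at E1 E2 E3
      simp only [coeff_derivative, coeff_X_pow] at E1 E2 E3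
      norm_num at E1 E2 E3
      split_ifs at E1 <;> try omega
      norm_num at E1
      push_cast at E1 E2 E3 ⊢
      refine ⟨by linear_combination E1 - E3, by linear_combination E2,
        by linear_combination (-((t:ℝ)+2)) * E1 + ((t:ℝ)+3) * E3⟩
  · rintro ⟨hb, hc1, hc2⟩ p hp
    rw [degree_le_iff_coeff_zero]
    intro m hm
    have hm' : n < m := by exact_mod_cast hm
    have hp' : ∀ j : ℕ, n < j → p.coeff j = 0 := fun j hj =>
      coeff_eq_zero_of_degree_lt (lt_of_le_of_lt hp (by exact_mod_cast hj))
    rcases m with _ | _ | _ | _ | s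
    · omega
    · omega
    · -- m = 2
      have hn1 : n = 1 := by omega
      subst hn1
      rw [coeffQ2]
      simp only [coeff_derivative, hp' 2 (by omega), hp' 3 (by omega), hp' 4 (by omega)]
      push_cast at hc1 hc2 ⊢
      rw [hc1, hc2]; ring
    · -- m = 3
      rw [coeffQ3]
      simp only [coeff_derivative]
      rcases (show n = 1 ∨ n = 2 by omega) with rfl | rfl
      · simp only [hp' 2 (by omega), hp' 3 (by omega), hp' 4 (by omega), hp' 5 (by omega)]
        push_cast at hb hc1 hc2 ⊢
        rw [hb, hc1, hc2]; ring
      · simp only [hp' 3 (by omega), hp' 4 (by omega), hp' 5 (by omega)]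
        push_cast at hb hc1 hc2 ⊢
        rw [hb, hc1, hc2]; ring
    · -- m = s + 4
      rw [coeffQ]
      simp only [coeff_derivative]
      rcases (show n = s + 2 ∨ n = s + 3 ∨ n ≤ s + 1 by omega) with rfl | rfl | hle
      · simp only [hp' (s+3) (by omega), hp' (s+4) (by omega), hp' (s+5) (by omega),
          hp' (s+6) (by omega)]
        push_cast at hb hc1 hc2 ⊢
        rw [hb, hc1, hc2]; ring
      · simp only [hp' (s+4) (by omega), hp' (s+5) (by omega), hp' (s+6) (by omega)]
        push_cast at hb hc1 hc2 ⊢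
        rw [hb, hc1, hc2]; ring
      · simp only [hp' (s+2) (by omega), hp' (s+3) (by omega), hp' (s+4) (by omega),
          hp' (s+5) (by omega), hp' (s+6) (by omega)]
        ring
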